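/- Let n ≥ 1 and z : Fin n → ℝ. For every τ > 0, the Kullback–Leibler divergence of the tempered soft label from the uniform distribution on Fin n satisfies ∑_i softmaxτ(z, τ)_i · log(softmaxτ(z, τ)_i / (1/n)) = log n − H(softmaxτ(z, τ)). Consequently, if z is not constant (there exist i, j with z i ≠ z j), this KL divergence is strictly decreasing in τ on (0, ∞): raising the temperature drives the soft label strictly closer (in KL) to uniform. -/

import Mathlib

open Real Set

/-- Tempered softmax of logits `z` at temperature `τ`. -/
noncomputable def softmaxT {n : ℕ} (z : Fin n → ℝ) (τ : ℝ) (i : Fin n) : ℝ :=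
  Real.exp (z i / τ) / ∑ j, Real.exp (z j / τ)

namespace KLAux

variable {n : ℕ} (z : Fin n → ℝ)

noncomputable def S (β : ℝ) : ℝ := ∑ i, Real.exp (β * z i)
noncomputable def A (β : ℝ) : ℝ := ∑ i, z i * Real.exp (β * z i)
noncomputable def B (β : ℝ) : ℝ := ∑ i, (z i) ^ 2 * Real.exp (β * z i)
noncomputable def g (β : ℝ) : ℝ := β * A z β / S z β - Real.log (S z β)

lemma S_pos (hn : 1 ≤ n) (β : ℝ) : 0 < S z β := by
  have : Nonempty (Fin n) := Fin.pos_iff_nonempty.mp hn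
  exact Finset.sum_pos (fun i _ => exp_pos _) Finset.univ_nonempty

lemma hasDerivAt_S (β : ℝ) : HasDerivAt (S z) (A z β) β := by
  apply HasDerivAt.fun_sum
  intro i _
  simpa [mul_comm] using ((hasDerivAt_id β).mul_const (z i)).exp

lemma hasDerivAt_A (β : ℝ) : HasDerivAt (A z) (B z β) β := by
  apply HasDerivAt.fun_sum
  intro i _
  have := (((hasDerivAt_id β).mul_const (z i)).exp).const_mul (z i)
  convert this using 1
  · rfl
  · rfl
  · simp only [id_eq]
    ring

lemma hasDerivAt_g (hn : 1 ≤ n) (β : ℝ) :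
    HasDerivAt (g z) (β * (B z β * S z β - (A z β) ^ 2) / (S z β) ^ 2) β := by
  have hS := hasDerivAt_S z β
  have hA := hasDerivAt_A z β
  have hS0 : S z β ≠ 0 := (S_pos z hn β).ne'
  have h1 : HasDerivAt (fun b => b * A z b) (1 * A z β + β * B z β) β :=
    (hasDerivAt_id β).mul hA
  have h2 := (h1.div hS hS0).sub (hS.log hS0)
  convert h2 using 1
  · rfl
  · rfl
  · rfl
  · field_simp
    ring

lemma BS_sub_A_sq_pos (hn : 1 ≤ n) (hz : ∃ i j, z i ≠ z j) (β : ℝ) :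
    0 < B z β * S z β - (A z β) ^ 2 := by
  have hS := S_pos z hn β
  set μ := A z β / S z β with hμ
  have expand : ∑ i, (z i - μ) ^ 2 * Real.exp (β * z i)
      = B z β - 2 * μ * A z β + μ ^ 2 * S z β := by
    have h : ∀ i : Fin n, (z i - μ) ^ 2 * Real.exp (β * z i)
        = (z i) ^ 2 * Real.exp (β * z i) - 2 * μ * (z i * Real.exp (β * z i))
          + μ ^ 2 * Real.exp (β * z i) := fun i => by ring
    rw [Finset.sum_congr rfl fun i _ => h i]
    simp only [Finset.sum_add_distrib, Finset.sum_sub_distrib, ← Finset.mul_sum]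
    rfl
  have hsum_pos : 0 < ∑ i, (z i - μ) ^ 2 * Real.exp (β * z i) := by
    obtain ⟨i, j, hij⟩ := hz
    have hwit : z i ≠ μ ∨ z j ≠ μ := by
      by_contra h
      push_neg at h
      exact hij (h.1.trans h.2.symm)
    apply Finset.sum_pos'
    · intro k _
      positivity
    · rcases hwit with h | h
      · have h' : z i - μ ≠ 0 := sub_ne_zero.mpr h
        exact ⟨i, Finset.mem_univ i, by positivity⟩
      · have h' : z j - μ ≠ 0 := sub_ne_zero.mpr h
        exact ⟨j, Finset.mem_univ j, by positivity⟩
  have key : B z β * S z β - (A z β) ^ 2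
      = S z β * (B z β - 2 * μ * A z β + μ ^ 2 * S z β) := by
    rw [hμ]; field_simp; ring
  rw [key, ← expand]
  exact mul_pos hS hsum_pos

lemma g_strictMono (hn : 1 ≤ n) (hz : ∃ i j, z i ≠ z j) :
    StrictMonoOn (g z) (Set.Ioi 0) := by
  apply strictMonoOn_of_deriv_pos (convex_Ioi 0)
  · exact fun β _ => (hasDerivAt_g z hn β).differentiableAt.continuousAt.continuousWithinAt
  · intro β hβ
    rw [interior_Ioi] at hβ
    rw [(hasDerivAt_g z hn β).deriv]
    have h1 := BS_sub_A_sq_pos z hn hz β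
    have h2 := S_pos z hn β
    exact div_pos (mul_pos hβ h1) (by positivity)

lemma softmax_eq (τ : ℝ) (i : Fin n) :
    softmaxT z τ i = Real.exp ((1 / τ) * z i) / S z (1 / τ) := by
  simp only [softmaxT, S, one_div, inv_mul_eq_div]

lemma softmax_pos (hn : 1 ≤ n) {τ : ℝ} (i : Fin n) : 0 < softmaxT z τ i := by
  rw [softmax_eq]
  exact div_pos (exp_pos _) (S_pos z hn _)

lemma sum_softmax (hn : 1 ≤ n) (τ : ℝ) : ∑ i, softmaxT z τ i = 1 := by
  simp only [softmax_eq]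
  rw [← Finset.sum_div]
  exact div_self (S_pos z hn _).ne'

lemma sum_plogp (hn : 1 ≤ n) (τ : ℝ) :
    ∑ i, softmaxT z τ i * Real.log (softmaxT z τ i) = g z (1 / τ) := by
  set β := 1 / τ with hβ
  have hS := S_pos z hn β
  have hterm : ∀ i : Fin n, softmaxT z τ i * Real.log (softmaxT z τ i)
      = (β * (z i * Real.exp (β * z i)) - Real.log (S z β) * Real.exp (β * z i)) / S z β := by
    intro i
    rw [softmax_eq, ← hβ, log_div (exp_ne_zero _) hS.ne', log_exp]
    field_simp
  rw [Finset.sum_congr rfl fun i _ => hterm i, ← Finset.sum_div, Finset.sum_sub_distrib,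
    ← Finset.mul_sum, ← Finset.mul_sum]
  show (β * A z β - Real.log (S z β) * S z β) / S z β = g z β
  unfold g
  field_simp

lemma kl_eq (hn : 1 ≤ n) (τ : ℝ) :
    ∑ i, softmaxT z τ i * Real.log (softmaxT z τ i / (1 / (n : ℝ)))
      = Real.log n + ∑ i, softmaxT z τ i * Real.log (softmaxT z τ i) := by
  have hn0 : (0 : ℝ) < (n : ℝ) := by exact_mod_cast hn.trans_lt' (by norm_num)
  have hterm : ∀ i : Fin n, softmaxT z τ i * Real.log (softmaxT z τ i / (1 / (n : ℝ)))
      = softmaxT z τ i * Real.log (softmaxT z τ i) + Real.log n * softmaxT z τ i := by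
    intro i
    rw [one_div, Real.log_div (softmax_pos z hn i).ne' (inv_ne_zero hn0.ne'), Real.log_inv]
    ring
  rw [Finset.sum_congr rfl fun i _ => hterm i, Finset.sum_add_distrib, ← Finset.mul_sum,
    sum_softmax z hn, mul_one, add_comm]

end KLAux

theorem kl_to_uniform_eq_and_strictAnti
    (n : ℕ) (hn : 1 ≤ n) (z : Fin n → ℝ) :
    (∀ τ : ℝ, 0 < τ →
      ∑ i, softmaxT z τ i * Real.log (softmaxT z τ i / (1 / (n : ℝ)))
        = Real.log n - (-∑ i, softmaxT z τ i * Real.log (softmaxT z τ i))) ∧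
    ((∃ i j, z i ≠ z j) →
      StrictAntiOn
        (fun τ : ℝ => ∑ i, softmaxT z τ i * Real.log (softmaxT z τ i / (1 / (n : ℝ))))
        (Set.Ioi 0)) := by
  constructor
  · intro τ _
    rw [KLAux.kl_eq z hn τ]
    ring
  · intro hz a ha b hb hab
    simp only
    rw [KLAux.kl_eq z hn a, KLAux.kl_eq z hn b, KLAux.sum_plogp z hn a, KLAux.sum_plogp z hn b]
    have ha' : (0 : ℝ) < a := ha
    have hb' : (0 : ℝ) < b := hb
    have h1 : (1 : ℝ) / b < 1 / a := by
      apply one_div_lt_one_div_of_lt ha' hab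
    have := KLAux.g_strictMono z hn hz (by simp [Set.mem_Ioi]; positivity : (1:ℝ)/b ∈ Set.Ioi 0)
      (by simp [Set.mem_Ioi]; positivity : (1:ℝ)/a ∈ Set.Ioi 0) h1
    linarith
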